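/- Let X and Y be separated locally convex topological vector spaces over the reals and let F₁, F₂ : X ⇉ Y be set-valued mappings with convex graphs. Assume that (i) int(gph F₁) ∩ gph F₂ ≠ ∅, or (ii) X and Y are Banach spaces, F₁ and F₂ have closed graphs, and ℝ⁺(gph F₁ − gph F₂) is a closed linear subspace of X × Y. Then for any x̄, any ȳ ∈ F₁(x̄) ∩ F₂(x̄), and any y* ∈ Y*: D*(F₁ ∩ F₂)(x̄,ȳ)(y*) = ⋃_{y*₁ + y*₂ = y*} (D*F₁(x̄,ȳ)(y*₁) + D*F₂(x̄,ȳ)(y*₂)). -/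

import Mathlib

open Pointwise

/-- Graph of a set-valued mapping. -/
def gphF {X Y : Type*} (F : X → Set Y) : Set (X × Y) := {p | p.2 ∈ F p.1}

/-- Coderivative of a convex-graph set-valued mapping `F` at `(xb, yb) ∈ gph F`. -/
def coderivF {X Y : Type*} [AddCommGroup X] [Module ℝ X] [TopologicalSpace X]
    [AddCommGroup Y] [Module ℝ Y] [TopologicalSpace Y]
    (F : X → Set Y) (xb : X) (yb : Y) (q : Y →L[ℝ] ℝ) : Set (X →L[ℝ] ℝ) :=
  {p | ∀ x : X, ∀ y ∈ F x, p (x - xb) - q (y - yb) ≤ 0}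

/-- `ℝ⁺(Ω) = {t • v : t > 0, v ∈ Ω}`. -/
def posSpan {X : Type*} [SMul ℝ X] (Ω : Set X) : Set X :=
  {x | ∃ t : ℝ, 0 < t ∧ ∃ v ∈ Ω, x = t • v}

/-- The (given) topology of `X` is generated by a complete norm compatible with the
linear structure, i.e. `X` is a Banach space. -/
def IsBanach (X : Type*) [AddCommGroup X] [Module ℝ X] [TopologicalSpace X] : Prop :=
  ∃ nm : X → ℝ,
    (∀ x, nm x = 0 ↔ x = 0) ∧
    (∀ x y, nm (x + y) ≤ nm x + nm y) ∧
    (∀ (c : ℝ) (x : X), nm (c • x) = |c| * nm x) ∧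
    (∀ s : Set X, IsOpen s ↔ ∀ x ∈ s, ∃ ε > 0, ∀ y, nm (y - x) < ε → y ∈ s) ∧
    (∀ u : ℕ → X, (∀ ε : ℝ, 0 < ε → ∃ N, ∀ m ≥ N, ∀ n ≥ N, nm (u m - u n) < ε) →
      ∃ x, Filter.Tendsto u Filter.atTop (nhds x))

open Set Filter Topology


private lemma norm_combo_le {W : Type*} [NormedAddCommGroup W] [NormedSpace ℝ W]
    {a b : W} {r θ θ' : ℝ} (hθ : 0 ≤ θ) (hθ' : 0 ≤ θ') (hsum : θ + θ' = 1)
    (ha : ‖a‖ ≤ r) (hb : ‖b‖ ≤ r) : ‖θ • a + θ' • b‖ ≤ r := by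
  calc ‖θ • a + θ' • b‖ ≤ ‖θ • a‖ + ‖θ' • b‖ := norm_add_le _ _
    _ = θ * ‖a‖ + θ' * ‖b‖ := by rw [norm_smul, norm_smul, Real.norm_of_nonneg hθ,
        Real.norm_of_nonneg hθ']
    _ ≤ θ * r + θ' * r := by
        have := mul_le_mul_of_nonneg_left ha hθ
        have := mul_le_mul_of_nonneg_left hb hθ'
        linarith
    _ = r := by rw [← add_mul, hsum, one_mul]

private lemma half_tsum_mem {W : Type*} [NormedAddCommGroup W] [NormedSpace ℝ W]
    {A : Set W} (hA : Convex ℝ A) (hAc : IsClosed A) {a : ℕ → W} (ha : ∀ j, a j ∈ A)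
    (hsum : Summable (fun j : ℕ => ((1/2:ℝ)^j) • a j)) :
    (1/2:ℝ) • (∑' j, ((1/2:ℝ)^j) • a j) ∈ A := by
  have hgeom : ∀ n : ℕ, ∑ j ∈ Finset.range n, ((1/2:ℝ))^(j+1) = 1 - (1/2)^n := by
    intro n
    have h := geom_sum_eq (by norm_num : (1/2:ℝ) ≠ 1) n
    have : ∑ j ∈ Finset.range n, ((1/2:ℝ))^(j+1)
        = (1/2) * ∑ j ∈ Finset.range n, ((1/2:ℝ))^j := by
      rw [Finset.mul_sum]
      exact Finset.sum_congr rfl fun j _ => by rw [pow_succ']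
    rw [this, h]
    ring
  have hshift : Summable (fun j : ℕ => ((1/2:ℝ))^(j+1) • a j) := by
    have : (fun j : ℕ => ((1/2:ℝ))^(j+1) • a j)
        = fun j => (1/2:ℝ) • (((1/2:ℝ))^j • a j) := by
      funext j
      rw [smul_smul, ← pow_succ']
    rw [this]
    exact hsum.const_smul _
  have hPlim : Tendsto (fun n => ∑ j ∈ Finset.range n, ((1/2:ℝ))^(j+1) • a j) atTop
      (𝓝 ((1/2:ℝ) • (∑' j, ((1/2:ℝ)^j) • a j))) := by
    have h1 := hshift.hasSum.tendsto_sum_nat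
    have h2 : (∑' j, ((1/2:ℝ))^(j+1) • a j) = (1/2:ℝ) • (∑' j, ((1/2:ℝ)^j) • a j) := by
      have : (fun j : ℕ => ((1/2:ℝ))^(j+1) • a j)
          = fun j => (1/2:ℝ) • (((1/2:ℝ))^j • a j) := by
        funext j
        rw [smul_smul, ← pow_succ']
      rw [this, Summable.tsum_const_smul _ hsum]
    rwa [h2] at h1
  have hclim : Tendsto (fun n : ℕ => (1 - (1/2:ℝ)^n)⁻¹) atTop (𝓝 1) := by
    have h1 : Tendsto (fun n : ℕ => 1 - (1/2:ℝ)^n) atTop (𝓝 1) := by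
      have := tendsto_pow_atTop_nhds_zero_of_lt_one (by norm_num : (0:ℝ) ≤ 1/2)
        (by norm_num : (1/2:ℝ) < 1)
      simpa using (tendsto_const_nhds.sub this)
    simpa using h1.inv₀ (by norm_num)
  have hslim : Tendsto (fun n : ℕ => (1 - (1/2:ℝ)^n)⁻¹ •
      (∑ j ∈ Finset.range n, ((1/2:ℝ))^(j+1) • a j)) atTop
      (𝓝 ((1/2:ℝ) • (∑' j, ((1/2:ℝ)^j) • a j))) := by
    have := hclim.smul hPlim
    simpa using this
  refine hAc.mem_of_tendsto hslim ?_
  filter_upwards [eventually_ge_atTop 1] with n hn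
  have hpow : (1/2:ℝ)^n < 1 := by
    apply pow_lt_one₀ (by norm_num) (by norm_num)
    omega
  have hden : 0 < 1 - (1/2:ℝ)^n := by linarith
  have := hA.sum_mem (t := Finset.range n)
    (w := fun j => (1 - (1/2:ℝ)^n)⁻¹ * ((1/2:ℝ))^(j+1)) (z := a)
    (fun j _ => by positivity)
    (by
      rw [← Finset.mul_sum, hgeom, inv_mul_cancel₀ hden.ne'])
    (fun j _ => ha j)
  have heq : ∑ j ∈ Finset.range n, ((1 - (1/2:ℝ)^n)⁻¹ * ((1/2:ℝ))^(j+1)) • a j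
      = (1 - (1/2:ℝ)^n)⁻¹ • (∑ j ∈ Finset.range n, ((1/2:ℝ))^(j+1) • a j) := by
    rw [Finset.smul_sum]
    exact Finset.sum_congr rfl fun j _ => by rw [smul_smul]
  rwa [heq] at this

set_option maxHeartbeats 1000000 in
private lemma robinson {W : Type*} [NormedAddCommGroup W] [NormedSpace ℝ W] [CompleteSpace W]
    {A B : Set W} (hA : Convex ℝ A) (hB : Convex ℝ B) (hAc : IsClosed A) (hBc : IsClosed B)
    (h0A : (0:W) ∈ A) (h0B : (0:W) ∈ B)
    (habs : ∀ w : W, ∃ t : ℝ, 0 < t ∧ ∃ a ∈ A, ∃ b ∈ B, w = t • (a - b)) :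
    ∃ ρ > (0:ℝ), ∃ R > (0:ℝ), ∀ w : W, ‖w‖ < ρ → ∃ a ∈ A, ∃ b ∈ B, ‖b‖ ≤ R ∧ w = a - b := by
  classical
  set C : ℝ → Set W :=
    fun r => {w | ∃ a ∈ A, ∃ b ∈ B, ‖a‖ ≤ r ∧ ‖b‖ ≤ r ∧ w = r • (a - b)} with hC
  have hzeroC : ∀ r : ℝ, 0 ≤ r → (0:W) ∈ C r := by
    intro r hr
    exact ⟨0, h0A, 0, h0B, by simpa using hr, by simpa using hr, by simp⟩
  have hmono : ∀ r r' : ℝ, 0 < r → r ≤ r' → C r ⊆ C r' := by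
    intro r r' hr hrr w hw
    obtain ⟨a, ha, b, hb, hna, hnb, rfl⟩ := hw
    have hr' : 0 < r' := lt_of_lt_of_le hr hrr
    set c := r / r' with hc
    have hc0 : 0 < c := div_pos hr hr'
    have hc1 : c ≤ 1 := (div_le_one hr').2 hrr
    refine ⟨c • a, hA.smul_mem_of_zero_mem h0A ha ⟨hc0.le, hc1⟩,
           c • b, hB.smul_mem_of_zero_mem h0B hb ⟨hc0.le, hc1⟩, ?_, ?_, ?_⟩
    · rw [norm_smul, Real.norm_of_nonneg hc0.le]
      nlinarith
    · rw [norm_smul, Real.norm_of_nonneg hc0.le]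
      nlinarith
    · rw [← smul_sub, smul_smul]
      congr 1
      have hne : r' ≠ 0 := hr'.ne'
      rw [eq_comm, mul_comm]
      exact div_mul_cancel₀ r hne
  have hconv : ∀ r : ℝ, Convex ℝ (C r) := by
    intro r w₁ hw₁ w₂ hw₂ θ θ' hθ hθ' hsum
    obtain ⟨a₁, ha₁, b₁, hb₁, hna₁, hnb₁, rfl⟩ := hw₁
    obtain ⟨a₂, ha₂, b₂, hb₂, hna₂, hnb₂, rfl⟩ := hw₂
    refine ⟨θ • a₁ + θ' • a₂, hA ha₁ ha₂ hθ hθ' hsum,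
           θ • b₁ + θ' • b₂, hB hb₁ hb₂ hθ hθ' hsum,
           norm_combo_le hθ hθ' hsum hna₁ hna₂,
           norm_combo_le hθ hθ' hsum hnb₁ hnb₂, ?_⟩
    simp only [smul_sub, smul_smul]
    module
  have hcover : ∀ w : W, ∃ n : ℕ, w ∈ C ((n:ℝ) + 1) := by
    intro w
    obtain ⟨t, ht, a, ha, b, hb, rfl⟩ := habs w
    obtain ⟨n, hn⟩ := exists_nat_ge (max t (max ‖a‖ ‖b‖))
    refine ⟨n, ?_⟩
    have hN : (0:ℝ) < (n:ℝ) + 1 := by positivity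
    have htn : t ≤ (n:ℝ) + 1 := le_trans (le_max_left _ _) (by linarith)
    have han : ‖a‖ ≤ (n:ℝ) + 1 := le_trans (le_trans (le_max_left _ _) (le_max_right _ _)) (by linarith)
    have hbn : ‖b‖ ≤ (n:ℝ) + 1 := le_trans (le_trans (le_max_right _ _) (le_max_right _ _)) (by linarith)
    set c := t / ((n:ℝ) + 1) with hc
    have hc0 : 0 < c := div_pos ht hN
    have hc1 : c ≤ 1 := (div_le_one hN).2 htn
    refine ⟨c • a, hA.smul_mem_of_zero_mem h0A ha ⟨hc0.le, hc1⟩,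
           c • b, hB.smul_mem_of_zero_mem h0B hb ⟨hc0.le, hc1⟩, ?_, ?_, ?_⟩
    · rw [norm_smul, Real.norm_of_nonneg hc0.le]; nlinarith [norm_nonneg a]
    · rw [norm_smul, Real.norm_of_nonneg hc0.le]; nlinarith [norm_nonneg b]
    · rw [← smul_sub, smul_smul]
      congr 1
      have hne : ((n:ℝ) + 1) ≠ 0 := hN.ne'
      rw [eq_comm, mul_comm]
      exact div_mul_cancel₀ t hne
  -- Baire category
  haveI : Nonempty W := ⟨0⟩
  obtain ⟨n₀, x₀, hx₀⟩ := nonempty_interior_of_iUnion_of_closed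
    (f := fun n : ℕ => closure (C ((n:ℝ) + 1))) (fun n => isClosed_closure)
    (eq_univ_of_forall fun w => mem_iUnion.2 ((hcover w).imp fun n hn => subset_closure hn))
  obtain ⟨m₀, hm₀⟩ := hcover (-x₀)
  set K : ℝ := (max n₀ m₀ : ℕ) + 1 with hKdef
  have hKpos : (0:ℝ) < K := by positivity
  have hsub1 : C ((n₀:ℝ) + 1) ⊆ C K := hmono _ _ (by positivity)
    (by have : (n₀:ℝ) ≤ ((n₀ ⊔ m₀ : ℕ):ℝ) := by exact_mod_cast Nat.le_max_left n₀ m₀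
        rw [hKdef]; linarith)
  have hsub2 : C ((m₀:ℝ) + 1) ⊆ C K := hmono _ _ (by positivity)
    (by have : (m₀:ℝ) ≤ ((n₀ ⊔ m₀ : ℕ):ℝ) := by exact_mod_cast Nat.le_max_right n₀ m₀
        rw [hKdef]; linarith)
  have hx₀' : x₀ ∈ interior (closure (C K)) :=
    interior_mono (closure_mono hsub1) hx₀
  have hmx₀ : -x₀ ∈ closure (C K) := subset_closure (hsub2 hm₀)
  have h0int : (0:W) ∈ interior (closure (C K)) := by
    have := (hconv K).closure.combo_interior_self_mem_interior hx₀' hmx₀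
      (by norm_num : (0:ℝ) < 1/2) (by norm_num : (0:ℝ) ≤ 1/2) (by norm_num)
    simpa using this
  obtain ⟨ρ, hρpos, hball⟩ : ∃ ρ > (0:ℝ), Metric.ball (0:W) ρ ⊆ closure (C K) := by
    rcases Metric.mem_nhds_iff.1 (mem_interior_iff_mem_nhds.1 h0int) with ⟨ρ, h1, h2⟩
    exact ⟨ρ, h1, h2⟩
  -- total step function
  have hstep : ∀ (k : ℕ) (v : W), ∃ ab : W × W, ab.1 ∈ A ∧ ab.2 ∈ B ∧ ‖ab.1‖ ≤ K ∧ ‖ab.2‖ ≤ K ∧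
      (‖v‖ < ρ * (1/2)^k → ‖v - ((1/2:ℝ)^k * K) • (ab.1 - ab.2)‖ < ρ * (1/2)^(k+1)) := by
    intro k v
    by_cases h : ‖v‖ < ρ * (1/2)^k
    · have hpk : (0:ℝ) < (1/2:ℝ)^k := by positivity
      have hv' : ((1/2:ℝ)^k)⁻¹ • v ∈ Metric.ball (0:W) ρ := by
        rw [Metric.mem_ball, dist_zero_right, norm_smul, Real.norm_of_nonneg (by positivity)]
        calc ((1/2:ℝ)^k)⁻¹ * ‖v‖ < ((1/2:ℝ)^k)⁻¹ * (ρ * (1/2)^k) :=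
              mul_lt_mul_of_pos_left h (by positivity)
          _ = ρ := by field_simp
      have := hball hv'
      rw [Metric.mem_closure_iff] at this
      obtain ⟨c, hcC, hcd⟩ := this (ρ/2) (by positivity)
      obtain ⟨a, ha, b, hb, hna, hnb, rfl⟩ := hcC
      refine ⟨(a, b), ha, hb, hna, hnb, fun _ => ?_⟩
      have h2 : ‖((1/2:ℝ)^k)⁻¹ • v - K • (a-b)‖ < ρ/2 := by
        rwa [dist_eq_norm] at hcd
      have h3 : ‖((1/2:ℝ)^k) • (((1/2:ℝ)^k)⁻¹ • v - K • (a-b))‖ < (1/2)^k * (ρ/2) := by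
        rw [norm_smul, Real.norm_of_nonneg (by positivity)]
        exact (mul_lt_mul_iff_right₀ hpk).2 h2
      have h4 : ((1/2:ℝ)^k) • (((1/2:ℝ)^k)⁻¹ • v - K • (a-b)) = v - ((1/2:ℝ)^k * K) • (a-b) := by
        rw [smul_sub, smul_smul, smul_smul, mul_inv_cancel₀ hpk.ne', one_smul]
      rw [h4] at h3
      calc ‖v - ((1/2:ℝ)^k * K) • (a - b)‖ < (1/2)^k * (ρ/2) := h3
        _ = ρ * (1/2)^(k+1) := by ring
    · exact ⟨(0, 0), h0A, h0B, by simpa using hKpos.le, by simpa using hKpos.le,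
        fun hc => absurd hc h⟩
  choose F hF1 hF2 hF3 hF4 hF5 using hstep
  -- the claim
  have main : ∀ w : W, ‖w‖ < ρ → ∃ a ∈ A, ∃ b ∈ B, ‖b‖ ≤ K ∧ w = (2*K) • (a - b) := by
    intro w hw
    set r : ℕ → W := fun k => Nat.rec w
      (fun k rk => rk - ((1/2:ℝ)^k * K) • ((F k rk).1 - (F k rk).2)) k with hrdef
    have hr0 : r 0 = w := rfl
    have hrsucc : ∀ k, r (k+1) = r k - ((1/2:ℝ)^k * K) • ((F k (r k)).1 - (F k (r k)).2) :=
      fun k => rfl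
    have hrnorm : ∀ k, ‖r k‖ < ρ * (1/2)^k := by
      intro k
      induction k with
      | zero => simpa [hr0] using hw
      | succ k ih =>
        rw [hrsucc]
        exact hF5 k (r k) ih
    set a : ℕ → W := fun k => (F k (r k)).1 with hadef
    set b : ℕ → W := fun k => (F k (r k)).2 with hbdef
    have hpart : ∀ n : ℕ, ∑ j ∈ Finset.range n, ((1/2:ℝ)^j * K) • (a j - b j) = w - r n := by
      intro n
      induction n with
      | zero => simp [hr0]
      | succ n ih =>
        rw [Finset.sum_range_succ, ih, hrsucc]
        abel
    have haA : ∀ j, a j ∈ A := fun j => hF1 j (r j)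
    have hbB : ∀ j, b j ∈ B := fun j => hF2 j (r j)
    have haK : ∀ j, ‖a j‖ ≤ K := fun j => hF3 j (r j)
    have hbK : ∀ j, ‖b j‖ ≤ K := fun j => hF4 j (r j)
    clear_value a b
    clear hadef hbdef
    clear_value r
    clear hrdef hF5 hrsucc hr0
    have hrlim : Tendsto r atTop (𝓝 0) := by
      rw [tendsto_zero_iff_norm_tendsto_zero]
      have h2 : Tendsto (fun k : ℕ => ρ * (1/2:ℝ)^k) atTop (𝓝 0) := by
        have := tendsto_pow_atTop_nhds_zero_of_lt_one (by norm_num : (0:ℝ) ≤ 1/2)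
          (by norm_num : (1/2:ℝ) < 1)
        simpa using this.const_mul ρ
      exact squeeze_zero (fun k => norm_nonneg _) (fun k => (hrnorm k).le) h2
    -- summability
    have hsuma : Summable (fun j : ℕ => ((1/2:ℝ)^j) • a j) := by
      refine Summable.of_norm_bounded (g := fun j => K * (1/2)^j)
        (summable_geometric_two.mul_left K) (fun j => ?_)
      rw [norm_smul, Real.norm_of_nonneg (by positivity)]
      have := haK j
      nlinarith [norm_nonneg (a j), pow_pos (by norm_num : (0:ℝ) < 1/2) j]
    have hsumb : Summable (fun j : ℕ => ((1/2:ℝ)^j) • b j) := by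
      refine Summable.of_norm_bounded (g := fun j => K * (1/2)^j)
        (summable_geometric_two.mul_left K) (fun j => ?_)
      rw [norm_smul, Real.norm_of_nonneg (by positivity)]
      have := hbK j
      nlinarith [norm_nonneg (b j), pow_pos (by norm_num : (0:ℝ) < 1/2) j]
    set α : W := ∑' j, ((1/2:ℝ)^j) • a j with hα
    set β : W := ∑' j, ((1/2:ℝ)^j) • b j with hβ
    -- w = K • (α - β)
    have hw_eq : w = K • (α - β) := by
      have hsum : Summable (fun j : ℕ => ((1/2:ℝ)^j * K) • (a j - b j)) := by
        have : (fun j : ℕ => ((1/2:ℝ)^j * K) • (a j - b j))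
            = fun j => K • (((1/2:ℝ)^j) • a j) - K • (((1/2:ℝ)^j) • b j) := by
          funext j
          rw [smul_sub]
          rw [smul_smul, smul_smul]
          rw [mul_comm]
        rw [this]
        exact ((hsuma.const_smul K).sub (hsumb.const_smul K))
      have h1 : Tendsto (fun n => ∑ j ∈ Finset.range n, ((1/2:ℝ)^j * K) • (a j - b j))
          atTop (𝓝 (∑' j, ((1/2:ℝ)^j * K) • (a j - b j))) := hsum.hasSum.tendsto_sum_nat
      have h2 : Tendsto (fun n => ∑ j ∈ Finset.range n, ((1/2:ℝ)^j * K) • (a j - b j))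
          atTop (𝓝 w) := by
        simp only [hpart]
        simpa using (tendsto_const_nhds.sub hrlim)
      have h3 : w = ∑' j, ((1/2:ℝ)^j * K) • (a j - b j) := tendsto_nhds_unique h2 h1
      rw [h3]
      have h4 : ∀ j : ℕ, ((1/2:ℝ)^j * K) • (a j - b j)
          = K • (((1/2:ℝ)^j) • a j) - K • (((1/2:ℝ)^j) • b j) := by
        intro j
        rw [smul_sub, smul_smul, smul_smul, mul_comm]
      calc (∑' j, ((1/2:ℝ)^j * K) • (a j - b j))
          = ∑' j, (K • (((1/2:ℝ)^j) • a j) - K • (((1/2:ℝ)^j) • b j)) := by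
            exact tsum_congr h4
        _ = (∑' j, K • (((1/2:ℝ)^j) • a j)) - ∑' j, K • (((1/2:ℝ)^j) • b j) :=
            Summable.tsum_sub (hsuma.const_smul K) (hsumb.const_smul K)
        _ = K • α - K • β := by
            rw [Summable.tsum_const_smul K hsuma, Summable.tsum_const_smul K hsumb]
        _ = K • (α - β) := (smul_sub _ _ _).symm
    -- memberships of the averaged sums
    have ha2 : (1/2:ℝ) • α ∈ A := half_tsum_mem hA hAc haA hsuma
    have hb2 : (1/2:ℝ) • β ∈ B := half_tsum_mem hB hBc hbB hsumb
    have hnormb : ‖(1/2:ℝ) • β‖ ≤ K := by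
      have hsumnb : Summable (fun j : ℕ => ‖((1/2:ℝ)^j) • b j‖) := by
        refine Summable.of_nonneg_of_le (fun j => norm_nonneg _) (fun j => ?_)
          (summable_geometric_two.mul_left K)
        rw [norm_smul, Real.norm_of_nonneg (by positivity)]
        have := hbK j
        nlinarith [norm_nonneg (b j), pow_pos (by norm_num : (0:ℝ) < 1/2) j]
      have h1 : ‖β‖ ≤ ∑' j, ‖((1/2:ℝ)^j) • b j‖ := norm_tsum_le_tsum_norm hsumnb
      have h2 : (∑' j, ‖((1/2:ℝ)^j) • b j‖) ≤ ∑' j : ℕ, K * (1/2:ℝ)^j := by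
        refine Summable.tsum_le_tsum (fun j => ?_) hsumnb (summable_geometric_two.mul_left K)
        rw [norm_smul, Real.norm_of_nonneg (by positivity)]
        have := hbK j
        nlinarith [norm_nonneg (b j), pow_pos (by norm_num : (0:ℝ) < 1/2) j]
      have h3 : (∑' j : ℕ, K * (1/2:ℝ)^j) = K * 2 := by
        rw [tsum_mul_left, tsum_geometric_two]
      rw [norm_smul, Real.norm_of_nonneg (by norm_num : (0:ℝ) ≤ 1/2)]
      nlinarith [norm_nonneg β]
    refine ⟨(1/2:ℝ) • α, ha2, (1/2:ℝ) • β, hb2, hnormb, ?_⟩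
    rw [hw_eq, ← smul_sub, smul_smul]
    congr 1
    ring
  -- conclusion
  refine ⟨ρ / (2*K), by positivity, K, hKpos, fun w hw => ?_⟩
  have h1 : ‖(2*K) • w‖ < ρ := by
    rw [norm_smul, Real.norm_of_nonneg (by positivity)]
    calc (2*K) * ‖w‖ < (2*K) * (ρ / (2*K)) := by
          exact mul_lt_mul_of_pos_left hw (by positivity)
      _ = ρ := by field_simp
  obtain ⟨a, ha, b, hb, hnb, heq⟩ := main _ h1
  refine ⟨a, ha, b, hb, hnb, ?_⟩
  have h2K : (2*K : ℝ) ≠ 0 := by positivity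
  apply smul_right_injective W h2K
  exact heq


private lemma real_combo_le {a d u : ℝ} (h : ∀ l : ℝ, 0 < l → l ≤ 1 → a + l * d ≤ u) : a ≤ u := by
  have ht : Tendsto (fun l : ℝ => a + l * d) (𝓝[>] (0:ℝ)) (𝓝 a) := by
    have : Tendsto (fun l : ℝ => a + l * d) (𝓝 (0:ℝ)) (𝓝 (a + 0 * d)) :=
      (continuous_const.add (continuous_id.mul continuous_const)).tendsto 0
    simpa using this.mono_left nhdsWithin_le_nhds
  refine le_of_tendsto ht ?_
  filter_upwards [Ioc_mem_nhdsGT_of_mem (left_mem_Ico.2 one_pos)] with l hl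
  exact h l hl.1 hl.2

/-- If a continuous linear functional is `≤ u` on the interior of a convex set with
nonempty interior, it is `≤ u` on the whole set. -/
private lemma convex_le_extend {E : Type*} [AddCommGroup E] [Module ℝ E] [TopologicalSpace E]
    [IsTopologicalAddGroup E] [ContinuousSMul ℝ E] {S : Set E} (hS : Convex ℝ S)
    (f : E →L[ℝ] ℝ) {u : ℝ} (hle : ∀ p ∈ interior S, f p ≤ u)
    {p₀ : E} (hp₀ : p₀ ∈ interior S) {p : E} (hp : p ∈ S) : f p ≤ u := by
  refine real_combo_le (a := f p) (d := f p₀ - f p) (fun l h0 h1 => ?_)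
  have hmem := hS.combo_interior_self_mem_interior hp₀ hp h0 (by linarith : (0:ℝ) ≤ 1 - l)
    (by ring)
  have := hle _ hmem
  rw [map_add, map_smul, map_smul] at this
  simp only [smul_eq_mul] at this
  linarith

/-- Case (i) splitting: separation with an interior point. -/
private theorem split_interior {E : Type*} [AddCommGroup E] [Module ℝ E] [TopologicalSpace E]
    [IsTopologicalAddGroup E] [ContinuousSMul ℝ E]
    {Ω₁ Ω₂ : Set E} (h₁ : Convex ℝ Ω₁) (h₂ : Convex ℝ Ω₂)
    (hint : (interior Ω₁ ∩ Ω₂).Nonempty) {zb : E} (hzb : zb ∈ Ω₁ ∩ Ω₂)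
    (g : E →L[ℝ] ℝ) (hg : ∀ z ∈ Ω₁ ∩ Ω₂, g (z - zb) ≤ 0) :
    ∃ g₁ g₂ : E →L[ℝ] ℝ, g₁ + g₂ = g ∧ (∀ z ∈ Ω₁, g₁ (z - zb) ≤ 0) ∧ ∀ z ∈ Ω₂, g₂ (z - zb) ≤ 0 := by
  obtain ⟨z₀, hz₀i, hz₀2⟩ := hint
  -- sets in E × ℝ
  set S : Set (E × ℝ) := {p | p.1 ∈ interior Ω₁} ∩ {p | p.2 - g p.1 < -(g zb)} with hSdef
  have hSmem : ∀ p : E × ℝ, p ∈ S ↔ p.1 ∈ interior Ω₁ ∧ p.2 < g (p.1 - zb) := by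
    intro p
    simp only [hSdef, mem_inter_iff, mem_setOf_eq, map_sub]
    constructor <;> rintro ⟨h1, h2⟩ <;> exact ⟨h1, by linarith⟩
  have hSopen : IsOpen S := by
    refine IsOpen.inter (isOpen_interior.preimage continuous_fst) ?_
    have : Continuous fun p : E × ℝ => p.2 - g p.1 :=
      continuous_snd.sub (g.continuous.comp continuous_fst)
    exact isOpen_lt this continuous_const
  have hSconv : Convex ℝ S := by
    refine Convex.inter (h₁.interior.linear_preimage (LinearMap.fst ℝ E ℝ)) ?_
    refine convex_halfSpace_lt ⟨fun p q => by simp [map_add]; ring, fun c p => by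
      simp [map_smul]; ring⟩ _
  set T : Set (E × ℝ) := Ω₂ ×ˢ Ici (0:ℝ) with hTdef
  have hTconv : Convex ℝ T := h₂.prod (convex_Ici 0)
  have hdisj : Disjoint S T := by
    rw [Set.disjoint_left]
    rintro p hpS hpT
    rw [hSmem] at hpS
    obtain ⟨hp1, hp2⟩ := hpS
    obtain ⟨hq1, hq2⟩ := hpT
    have hle := hg p.1 ⟨interior_subset hp1, hq1⟩
    have h0 : (0:ℝ) ≤ p.2 := hq2
    linarith
  obtain ⟨f, u, hfu, huf⟩ := geometric_hahn_banach_open hSconv hSopen hTconv hdisj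
  set k : E →L[ℝ] ℝ := f.comp (ContinuousLinearMap.inl ℝ E ℝ) with hk
  set s : ℝ := f (0, 1) with hs
  have hdecomp : ∀ (w : E) (t : ℝ), f (w, t) = k w + t * s := by
    intro w t
    have h1 : (w, t) = (w, (0:ℝ)) + t • ((0:E), (1:ℝ)) := by
      simp [Prod.ext_iff]
    rw [h1, map_add, map_smul]
    simp [hk, hs, smul_eq_mul]
  -- s > 0
  have hz₀c : ∀ t : ℝ, t < g (z₀ - zb) → k z₀ + t * s < u := by
    intro t ht
    have : ((z₀, t) : E × ℝ) ∈ S := (hSmem _).2 ⟨hz₀i, ht⟩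
    have := hfu _ this
    rwa [hdecomp] at this
  have hz₀T : u ≤ k z₀ := by
    have : ((z₀, (0:ℝ)) : E × ℝ) ∈ T := ⟨hz₀2, by simp [hTdef]⟩
    have := huf _ this
    rwa [hdecomp, zero_mul, add_zero] at this
  have hspos : 0 < s := by
    rcases lt_trichotomy s 0 with h | h | h
    · exfalso
      set c := g (z₀ - zb)
      set t := min (c - 1) ((u - k z₀) / s)
      have ht : t < c := lt_of_le_of_lt (min_le_left _ _) (by linarith)
      have h2 := hz₀c t ht
      have h3 : t ≤ (u - k z₀) / s := min_le_right _ _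
      have h4 : t * s ≥ ((u - k z₀) / s) * s := by
        exact mul_le_mul_of_nonpos_right h3 h.le
      rw [div_mul_cancel₀ _ h.ne] at h4
      linarith
    · exfalso
      have h2 := hz₀c (g (z₀ - zb) - 1) (by linarith)
      rw [h, mul_zero, add_zero] at h2
      linarith
    · exact h
  -- on interior Ω₁ : k z + g (z - zb) * s ≤ u
  have hint1 : ∀ z ∈ interior Ω₁, k z + g (z - zb) * s ≤ u := by
    intro z hz
    by_contra hcon
    push_neg at hcon
    set ε := (k z + g (z - zb) * s - u) / (2 * s) with hε
    have hεpos : 0 < ε := div_pos (by linarith) (by linarith)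
    have hmem : ((z, g (z - zb) - ε) : E × ℝ) ∈ S := (hSmem _).2 ⟨hz, by
      show g (z - zb) - ε < g ((z : E) - zb)
      linarith⟩
    have h2 := hfu _ hmem
    rw [hdecomp] at h2
    have h3 : ε * s = (k z + g (z - zb) * s - u) / 2 := by
      rw [hε, div_mul_eq_mul_div, mul_comm (2:ℝ) s, ← div_div, mul_div_cancel_right₀ _ hspos.ne']
    nlinarith
  -- extend to Ω₁ using G := k + s • g
  have hall1 : ∀ z ∈ Ω₁, k z + g (z - zb) * s ≤ u := by
    intro z hz
    set G : E →L[ℝ] ℝ := k + s • g with hG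
    have hGapp : ∀ w : E, G w = k w + s * g w := by
      intro w; simp [hG, smul_eq_mul]
    have key : ∀ p ∈ interior Ω₁, G p ≤ u + s * g zb := by
      intro p hp
      have := hint1 p hp
      rw [map_sub] at this
      rw [hGapp]
      linarith [this]
    have := convex_le_extend h₁ G key hz₀i hz
    rw [hGapp] at this
    rw [map_sub]
    linarith
  have hall2 : ∀ z ∈ Ω₂, u ≤ k z := by
    intro z hz
    have : ((z, (0:ℝ)) : E × ℝ) ∈ T := ⟨hz, by simp [hTdef]⟩
    have := huf _ this
    rwa [hdecomp, zero_mul, add_zero] at this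
  have hu : u = k zb := by
    have h1 := hall1 zb hzb.1
    have h2 := hall2 zb hzb.2
    rw [sub_self, map_zero, zero_mul, add_zero] at h1
    linarith
  refine ⟨g + s⁻¹ • k, -(s⁻¹ • k), by ext w; simp, ?_, ?_⟩
  · intro z hz
    have h1 := hall1 z hz
    simp only [ContinuousLinearMap.add_apply, ContinuousLinearMap.coe_smul',
      Pi.smul_apply, smul_eq_mul]
    have h2 : k (z - zb) = k z - k zb := map_sub _ _ _
    rw [h2]
    have h3 : k z - k zb ≤ -(g (z - zb) * s) := by rw [← hu]; linarith
    have h4 : s⁻¹ * (k z - k zb) ≤ s⁻¹ * (-(g (z - zb) * s)) :=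
      mul_le_mul_of_nonneg_left h3 (inv_pos.2 hspos).le
    have h5 : s⁻¹ * (-(g (z - zb) * s)) = -g (z - zb) := by
      field_simp
    linarith
  · intro z hz
    have h1 := hall2 z hz
    simp only [ContinuousLinearMap.neg_apply, ContinuousLinearMap.coe_smul',
      Pi.smul_apply, smul_eq_mul, neg_nonpos]
    rw [map_sub, ← hu]
    have : 0 ≤ k z - u := by linarith
    positivity

set_option maxHeartbeats 1000000 in
set_option synthInstance.maxHeartbeats 400000 in
private theorem split_banach {E : Type*} [NormedAddCommGroup E] [NormedSpace ℝ E]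
    [CompleteSpace E]
    {Ω₁ Ω₂ : Set E} (h₁ : Convex ℝ Ω₁) (h₂ : Convex ℝ Ω₂)
    (hc₁ : IsClosed Ω₁) (hc₂ : IsClosed Ω₂)
    (L : Submodule ℝ E) (hLc : IsClosed (L : Set E))
    (hspan : posSpan (Ω₁ - Ω₂) = (L : Set E))
    {zb : E} (hzb : zb ∈ Ω₁ ∩ Ω₂)
    (g : E →L[ℝ] ℝ) (hg : ∀ z ∈ Ω₁ ∩ Ω₂, g (z - zb) ≤ 0) :
    ∃ g₁ g₂ : E →L[ℝ] ℝ, g₁ + g₂ = g ∧ (∀ z ∈ Ω₁, g₁ (z - zb) ≤ 0) ∧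
      ∀ z ∈ Ω₂, g₂ (z - zb) ≤ 0 := by
  classical
  haveI : CompleteSpace L := hLc.isComplete.completeSpace_coe
  -- elements of Ω₁ (resp. Ω₂) shifted by `zb` lie in L
  have hmemL : ∀ z : E, z ∈ Ω₁ ∪ Ω₂ → z - zb ∈ L := by
    intro z hz
    have hsub : z - zb ∈ Ω₁ - Ω₂ ∨ zb - z ∈ Ω₁ - Ω₂ := by
      rcases hz with hz | hz
      · exact Or.inl (Set.sub_mem_sub hz hzb.2)
      · exact Or.inr (Set.sub_mem_sub hzb.1 hz)
    have hps : ∀ v : E, v ∈ Ω₁ - Ω₂ → v ∈ L := by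
      intro v hv
      have : v ∈ posSpan (Ω₁ - Ω₂) := ⟨1, one_pos, v, hv, (one_smul ℝ v).symm⟩
      rwa [hspan] at this
    rcases hsub with h | h
    · exact hps _ h
    · have := hps _ h
      have := neg_mem this
      simpa using this
  set A : Set L := {w | (w:E) + zb ∈ Ω₁} with hAdef
  set B : Set L := {w | (w:E) + zb ∈ Ω₂} with hBdef
  have hAconv : Convex ℝ A := by
    intro w₁ hw₁ w₂ hw₂ θ θ' hθ hθ' hsum
    have hθ2 : θ' = 1 - θ := by linarith
    subst hθ2
    have key : ((θ • w₁ + (1-θ) • w₂ : L) : E) + zb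
        = θ • ((w₁:E) + zb) + (1-θ) • ((w₂:E) + zb) := by
      push_cast
      module
    show ((θ • w₁ + (1-θ) • w₂ : L) : E) + zb ∈ Ω₁
    rw [key]
    exact h₁ hw₁ hw₂ hθ hθ' (by linarith)
  have hBconv : Convex ℝ B := by
    intro w₁ hw₁ w₂ hw₂ θ θ' hθ hθ' hsum
    have hθ2 : θ' = 1 - θ := by linarith
    subst hθ2
    have key : ((θ • w₁ + (1-θ) • w₂ : L) : E) + zb
        = θ • ((w₁:E) + zb) + (1-θ) • ((w₂:E) + zb) := by
      push_cast
      module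
    show ((θ • w₁ + (1-θ) • w₂ : L) : E) + zb ∈ Ω₂
    rw [key]
    exact h₂ hw₁ hw₂ hθ hθ' (by linarith)
  have hAc : IsClosed A := hc₁.preimage (continuous_subtype_val.add continuous_const)
  have hBc : IsClosed B := hc₂.preimage (continuous_subtype_val.add continuous_const)
  have h0A : (0 : L) ∈ A := by
    show ((0:L):E) + zb ∈ Ω₁
    simpa using hzb.1
  have h0B : (0 : L) ∈ B := by
    show ((0:L):E) + zb ∈ Ω₂
    simpa using hzb.2
  have habs : ∀ w : L, ∃ t : ℝ, 0 < t ∧ ∃ a ∈ A, ∃ b ∈ B, w = t • (a - b) := by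
    intro w
    have hw : (w : E) ∈ posSpan (Ω₁ - Ω₂) := by
      rw [hspan]; exact w.2
    obtain ⟨t, ht, v, hv, heq⟩ := hw
    rw [Set.mem_sub] at hv
    obtain ⟨z₁, hz₁, z₂, hz₂, rfl⟩ := hv
    have hm₁ : z₁ - zb ∈ L := hmemL z₁ (Or.inl hz₁)
    have hm₂ : z₂ - zb ∈ L := hmemL z₂ (Or.inr hz₂)
    refine ⟨t, ht, ⟨z₁ - zb, hm₁⟩, by simp [hAdef, hz₁], ⟨z₂ - zb, hm₂⟩, by simp [hBdef, hz₂], ?_⟩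
    apply Subtype.ext
    push_cast
    rw [heq]
    congr 1
    abel
  obtain ⟨ρ, hρpos, R, hRpos, hrep⟩ := robinson hAconv hBconv hAc hBc h0A h0B habs
  set γ : L →L[ℝ] ℝ := g.comp L.subtypeL with hγdef
  have hγapp : ∀ w : L, γ w = g (w : E) := fun w => rfl
  have hγAB : ∀ w : L, w ∈ A ∩ B → γ w ≤ 0 := by
    intro w hw
    have := hg ((w:E) + zb) ⟨hw.1, hw.2⟩
    simpa [hγapp] using this
  -- the convex set H' in L × ℝ
  set H : Set (L × ℝ) := {p | ∃ a ∈ A, ∃ b ∈ B, ‖b‖ ≤ R ∧ p.1 = a - b ∧ p.2 ≤ γ b} with hHdef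
  have hHconv : Convex ℝ H := by
    rintro p hp q hq θ θ' hθ hθ' hsum
    obtain ⟨a₁, ha₁, b₁, hb₁, hnb₁, hp1, hp2⟩ := hp
    obtain ⟨a₂, ha₂, b₂, hb₂, hnb₂, hq1, hq2⟩ := hq
    refine ⟨θ • a₁ + θ' • a₂, hAconv ha₁ ha₂ hθ hθ' hsum,
           θ • b₁ + θ' • b₂, hBconv hb₁ hb₂ hθ hθ' hsum,
           norm_combo_le hθ hθ' hsum hnb₁ hnb₂, ?_, ?_⟩
    · show θ • p.1 + θ' • q.1 = _
      rw [hp1, hq1]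
      module
    · show θ • p.2 + θ' • q.2 ≤ _
      rw [map_add, map_smul, map_smul]
      simp only [smul_eq_mul]
      have := mul_le_mul_of_nonneg_left hp2 hθ
      have := mul_le_mul_of_nonneg_left hq2 hθ'
      linarith
  have hUsub : (Metric.ball (0:L) ρ) ×ˢ (Iio (-(‖γ‖ * R) - 1)) ⊆ H := by
    rintro ⟨w, t⟩ ⟨hw, ht⟩
    obtain ⟨a, ha, b, hb, hnb, heq⟩ := hrep w (by simpa using hw)
    refine ⟨a, ha, b, hb, hnb, heq, ?_⟩
    have h1 : |γ b| ≤ ‖γ‖ * ‖b‖ := by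
      have := γ.le_opNorm b
      simpa using this
    have h2 : ‖γ‖ * ‖b‖ ≤ ‖γ‖ * R := mul_le_mul_of_nonneg_left hnb γ.opNorm_nonneg
    have h3 : -(‖γ‖ * R) ≤ γ b := by
      have := neg_abs_le (γ b)
      linarith
    have ht' : t < -(‖γ‖ * R) - 1 := ht
    show t ≤ γ b
    linarith
  have hUopen : IsOpen ((Metric.ball (0:L) ρ) ×ˢ (Iio (-(‖γ‖ * R) - 1))) :=
    Metric.isOpen_ball.prod isOpen_Iio
  have hp₀mem : (((0:L), -(‖γ‖ * R) - 2) : L × ℝ) ∈ interior H := by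
    apply interior_maximal hUsub hUopen
    constructor
    · simpa using hρpos
    · show -(‖γ‖ * R) - 2 < -(‖γ‖ * R) - 1
      linarith
  set T : Set (L × ℝ) := ({0} : Set L) ×ˢ Ici (0:ℝ) with hTdef
  have hTconv : Convex ℝ T := (convex_singleton 0).prod (convex_Ici 0)
  have hdisj : Disjoint (interior H) T := by
    rw [Set.disjoint_left]
    rintro ⟨w, t⟩ hpi ⟨hw0, ht0⟩
    have hw0' : w = 0 := hw0
    obtain ⟨ε, hεpos, hball⟩ := Metric.isOpen_iff.1 isOpen_interior _ hpi
    have hmem2 : ((w, t + ε/2) : L × ℝ) ∈ H := by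
      apply interior_subset
      apply hball
      rw [Metric.mem_ball, Prod.dist_eq]
      simp only [dist_self]
      rw [Real.dist_eq]
      have habs2 : |t + ε/2 - t| = ε/2 := by
        rw [show t + ε/2 - t = ε/2 by ring, abs_of_pos (by linarith)]
      rw [habs2, max_lt_iff]
      exact ⟨hεpos, by linarith⟩
    obtain ⟨a, ha, b, hb, hnb, heq1, heq2⟩ := hmem2
    have hab : a = b := by
      have : a - b = 0 := by rw [← heq1]; exact hw0'
      exact sub_eq_zero.1 this
    have hbAB : b ∈ A ∩ B := ⟨hab ▸ ha, hb⟩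
    have := hγAB b hbAB
    have ht0' : (0:ℝ) ≤ t := ht0
    have : t + ε/2 ≤ γ b := heq2
    linarith [hγAB b hbAB]
  obtain ⟨f, u, hfu, huf⟩ := geometric_hahn_banach_open hHconv.interior isOpen_interior
    hTconv hdisj
  set k : L →L[ℝ] ℝ := f.comp (ContinuousLinearMap.inl ℝ L ℝ) with hk
  set s : ℝ := f (0, 1) with hs
  have hdecomp : ∀ (w : L) (t : ℝ), f (w, t) = k w + t * s := by
    intro w t
    have h1 : ((w, t) : L × ℝ) = (w, (0:ℝ)) + t • ((0:L), (1:ℝ)) := by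
      simp [Prod.ext_iff]
    rw [h1, map_add, map_smul]
    simp [hk, hs, smul_eq_mul]
  have hu0 : u ≤ 0 := by
    have : (((0:L), (0:ℝ)) : L × ℝ) ∈ T := by
      constructor
      · exact rfl
      · show (0:ℝ) ≤ 0
        exact le_refl 0
    have := huf _ this
    rw [hdecomp] at this
    simpa using this
  have hspos : 0 < s := by
    have h1 := hfu _ hp₀mem
    rw [hdecomp] at h1
    simp only [map_zero, zero_add] at h1
    by_contra hcon
    push_neg at hcon
    have ht₀ : -(‖γ‖ * R) - 2 < 0 := by
      have : 0 ≤ ‖γ‖ * R := mul_nonneg γ.opNorm_nonneg hRpos.le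
      linarith
    nlinarith
  have hHle : ∀ p ∈ H, f p ≤ u :=
    fun p hp => convex_le_extend hHconv f (fun q hq => (hfu q hq).le) hp₀mem hp
  have hkey : ∀ a ∈ A, ∀ b ∈ B, ‖b‖ ≤ R → k (a - b) + γ b * s ≤ 0 := by
    intro a ha b hb hnb
    have : ((a - b, γ b) : L × ℝ) ∈ H := ⟨a, ha, b, hb, hnb, rfl, le_refl _⟩
    have := hHle _ this
    rw [hdecomp] at this
    linarith
  have hkey' : ∀ a ∈ A, ∀ b ∈ B, k (a - b) + γ b * s ≤ 0 := by
    intro a ha b hb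
    set lam := min 1 (R / (‖b‖ + 1)) with hlam
    have hbpos : (0:ℝ) < ‖b‖ + 1 := by positivity
    have hlam0 : 0 < lam := lt_min one_pos (div_pos hRpos hbpos)
    have hlam1 : lam ≤ 1 := min_le_left _ _
    have hmema : lam • a ∈ A := hAconv.smul_mem_of_zero_mem h0A ha ⟨hlam0.le, hlam1⟩
    have hmemb : lam • b ∈ B := hBconv.smul_mem_of_zero_mem h0B hb ⟨hlam0.le, hlam1⟩
    have hnb' : ‖lam • b‖ ≤ R := by
      rw [norm_smul, Real.norm_of_nonneg hlam0.le]
      have h1 : lam ≤ R / (‖b‖ + 1) := min_le_right _ _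
      have h2 : lam * ‖b‖ ≤ (R / (‖b‖ + 1)) * ‖b‖ :=
        mul_le_mul_of_nonneg_right h1 (norm_nonneg _)
      have h3 : (R / (‖b‖ + 1)) * ‖b‖ ≤ R := by
        rw [div_mul_eq_mul_div, div_le_iff₀ hbpos]
        nlinarith [norm_nonneg b]
      linarith
    have := hkey _ hmema _ hmemb hnb'
    have heq : lam • a - lam • b = lam • (a - b) := (smul_sub _ _ _).symm
    rw [heq, map_smul, map_smul] at this
    simp only [smul_eq_mul] at this
    have : lam * (k (a - b) + γ b * s) ≤ 0 := by linarith [this]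
    by_contra hcon
    push_neg at hcon
    nlinarith
  have hγle : ∀ a ∈ A, ∀ b ∈ B, γ b ≤ (-(s⁻¹) • k) (a - b) := by
    intro a ha b hb
    have h1 := hkey' a ha b hb
    have h2 : k (a - b) ≤ -(γ b * s) := by linarith
    have h3 : s⁻¹ * k (a - b) ≤ s⁻¹ * (-(γ b * s)) :=
      mul_le_mul_of_nonneg_left h2 (inv_pos.2 hspos).le
    have h4 : s⁻¹ * (-(γ b * s)) = -γ b := by
      field_simp
    simp only [ContinuousLinearMap.coe_smul', Pi.smul_apply, smul_eq_mul,
      ContinuousLinearMap.neg_apply, Pi.neg_apply]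
    nlinarith [h3, h4]
  set h : L →L[ℝ] ℝ := -(s⁻¹) • k with hh
  obtain ⟨hbar, hext, -⟩ := exists_extension_norm_eq L h
  refine ⟨-hbar, g + hbar, by ext w; simp, ?_, ?_⟩
  · intro z hz
    have hm : z - zb ∈ L := hmemL z (Or.inl hz)
    have haA : (⟨z - zb, hm⟩ : L) ∈ A := by
      show (z - zb) + zb ∈ Ω₁
      simpa using hz
    have h1 := hγle _ haA _ h0B
    rw [sub_zero, map_zero] at h1
    have h2 : hbar (z - zb) = h (⟨z - zb, hm⟩ : L) := hext ⟨z - zb, hm⟩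
    simp only [ContinuousLinearMap.neg_apply]
    rw [h2]
    linarith
  · intro z hz
    have hm : z - zb ∈ L := hmemL z (Or.inr hz)
    have hbB : (⟨z - zb, hm⟩ : L) ∈ B := by
      show (z - zb) + zb ∈ Ω₂
      simpa using hz
    have h1 := hγle _ h0A _ hbB
    rw [zero_sub, map_neg] at h1
    have h2 : hbar (z - zb) = h (⟨z - zb, hm⟩ : L) := hext ⟨z - zb, hm⟩
    have h3 : γ (⟨z - zb, hm⟩ : L) = g (z - zb) := rfl
    simp only [ContinuousLinearMap.add_apply]
    rw [h2, ← h3]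
    linarith

private theorem split_transfer {Z : Type*} [AddCommGroup Z] [Module ℝ Z] [TopologicalSpace Z]
    {E : Type*} [NormedAddCommGroup E] [NormedSpace ℝ E] [CompleteSpace E]
    (e : E ≃L[ℝ] Z)
    {Ω₁ Ω₂ : Set Z} (h₁ : Convex ℝ Ω₁) (h₂ : Convex ℝ Ω₂)
    (hc₁ : IsClosed Ω₁) (hc₂ : IsClosed Ω₂)
    (L : Submodule ℝ Z) (hLc : IsClosed (L : Set Z))
    (hspan : posSpan (Ω₁ - Ω₂) = (L : Set Z))
    {zb : Z} (hzb : zb ∈ Ω₁ ∩ Ω₂)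
    (g : Z →L[ℝ] ℝ) (hg : ∀ z ∈ Ω₁ ∩ Ω₂, g (z - zb) ≤ 0) :
    ∃ g₁ g₂ : Z →L[ℝ] ℝ, g₁ + g₂ = g ∧ (∀ z ∈ Ω₁, g₁ (z - zb) ≤ 0) ∧
      ∀ z ∈ Ω₂, g₂ (z - zb) ≤ 0 := by
  classical
  set Ω₁' : Set E := ⇑e ⁻¹' Ω₁ with hΩ₁def
  set Ω₂' : Set E := ⇑e ⁻¹' Ω₂ with hΩ₂def
  have h₁' : Convex ℝ Ω₁' := by
    intro x hx y hy θ θ' hθ hθ' hsum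
    show e (θ • x + θ' • y) ∈ Ω₁
    rw [map_add, map_smul, map_smul]
    exact h₁ hx hy hθ hθ' hsum
  have h₂' : Convex ℝ Ω₂' := by
    intro x hx y hy θ θ' hθ hθ' hsum
    show e (θ • x + θ' • y) ∈ Ω₂
    rw [map_add, map_smul, map_smul]
    exact h₂ hx hy hθ hθ' hsum
  have hc₁' : IsClosed Ω₁' := hc₁.preimage e.continuous
  have hc₂' : IsClosed Ω₂' := hc₂.preimage e.continuous
  set L' : Submodule ℝ E := L.comap (e : E →ₗ[ℝ] Z) with hL'def
  have hL'mem : ∀ x : E, x ∈ L' ↔ e x ∈ L := fun x => Iff.rfl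
  have hLc' : IsClosed (L' : Set E) := by
    have : (L' : Set E) = ⇑e ⁻¹' (L : Set Z) := rfl
    rw [this]
    exact hLc.preimage e.continuous
  have hspan' : posSpan (Ω₁' - Ω₂') = (L' : Set E) := by
    ext x
    constructor
    · rintro ⟨t, ht, v, hv, rfl⟩
      rw [Set.mem_sub] at hv
      obtain ⟨v₁, hv₁, v₂, hv₂, rfl⟩ := hv
      show e (t • (v₁ - v₂)) ∈ L
      have : e (t • (v₁ - v₂)) = t • (e v₁ - e v₂) := by
        rw [map_smul, map_sub]
      rw [this, ← SetLike.mem_coe, ← hspan]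
      exact ⟨t, ht, e v₁ - e v₂, Set.sub_mem_sub hv₁ hv₂, rfl⟩
    · intro hx
      have hex : e x ∈ posSpan (Ω₁ - Ω₂) := by
        rw [hspan]; exact hx
      obtain ⟨t, ht, v, hv, heq⟩ := hex
      rw [Set.mem_sub] at hv
      obtain ⟨v₁, hv₁, v₂, hv₂, rfl⟩ := hv
      refine ⟨t, ht, e.symm v₁ - e.symm v₂, Set.sub_mem_sub ?_ ?_, ?_⟩
      · show e (e.symm v₁) ∈ Ω₁
        rwa [e.apply_symm_apply]
      · show e (e.symm v₂) ∈ Ω₂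
        rwa [e.apply_symm_apply]
      · apply e.injective
        rw [heq, map_smul, map_sub, e.apply_symm_apply, e.apply_symm_apply]
  have hzb' : e.symm zb ∈ Ω₁' ∩ Ω₂' := by
    constructor
    · show e (e.symm zb) ∈ Ω₁
      rw [e.apply_symm_apply]; exact hzb.1
    · show e (e.symm zb) ∈ Ω₂
      rw [e.apply_symm_apply]; exact hzb.2
  set g' : E →L[ℝ] ℝ := g.comp (e : E →L[ℝ] Z) with hg'def
  have hg' : ∀ z ∈ Ω₁' ∩ Ω₂', g' (z - e.symm zb) ≤ 0 := by
    intro z hz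
    have : g' (z - e.symm zb) = g (e z - zb) := by
      show g (e (z - e.symm zb)) = g (e z - zb)
      rw [map_sub, e.apply_symm_apply]
    rw [this]
    exact hg (e z) ⟨hz.1, hz.2⟩
  obtain ⟨g₁', g₂', hsum', hineq₁', hineq₂'⟩ :=
    split_banach h₁' h₂' hc₁' hc₂' L' hLc' hspan' hzb' g' hg'
  refine ⟨g₁'.comp (e.symm : Z →L[ℝ] E), g₂'.comp (e.symm : Z →L[ℝ] E), ?_, ?_, ?_⟩
  · ext z
    have h1 : (g₁' + g₂') (e.symm z) = g' (e.symm z) := by rw [hsum']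
    simp only [ContinuousLinearMap.add_apply] at h1 ⊢
    simp only [ContinuousLinearMap.coe_comp', Function.comp_apply,
      ContinuousLinearEquiv.coe_coe]
    rw [h1]
    show g (e (e.symm z)) = g z
    rw [e.apply_symm_apply]
  · intro z hz
    have hmem : e.symm z ∈ Ω₁' := by
      show e (e.symm z) ∈ Ω₁
      rwa [e.apply_symm_apply]
    have := hineq₁' _ hmem
    have heq : e.symm z - e.symm zb = e.symm (z - zb) := by
      rw [map_sub]
    rw [heq] at this
    simpa using this
  · intro z hz
    have hmem : e.symm z ∈ Ω₂' := by
      show e (e.symm z) ∈ Ω₂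
      rwa [e.apply_symm_apply]
    have := hineq₂' _ hmem
    have heq : e.symm z - e.symm zb = e.symm (z - zb) := by
      rw [map_sub]
    rw [heq] at this
    simpa using this

private def NCopy (X : Type u) : Type u := X

private instance {X : Type*} [AddCommGroup X] : AddCommGroup (NCopy X) := ‹AddCommGroup X›
private instance {X : Type*} [AddCommGroup X] [Module ℝ X] : Module ℝ (NCopy X) :=
  ‹Module ℝ X›

private structure BanachModel (Z : Type u) [AddCommGroup Z] [Module ℝ Z]
    [TopologicalSpace Z] where
  E : Type u
  [nacg : NormedAddCommGroup E]
  [nsp : NormedSpace ℝ E]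
  [csp : CompleteSpace E]
  equiv : E ≃L[ℝ] Z

private noncomputable def banachModel {Z : Type*} [AddCommGroup Z] [Module ℝ Z]
    [TopologicalSpace Z] (h : IsBanach Z) : BanachModel Z :=
  let nm : Z → ℝ := h.choose
  have h0 : ∀ x, nm x = 0 ↔ x = 0 := h.choose_spec.1
  have hadd : ∀ x y, nm (x + y) ≤ nm x + nm y := h.choose_spec.2.1
  have hsmul : ∀ (c : ℝ) (x : Z), nm (c • x) = |c| * nm x := h.choose_spec.2.2.1
  have hopen : ∀ s : Set Z, IsOpen s ↔ ∀ x ∈ s, ∃ ε > 0, ∀ y, nm (y - x) < ε → y ∈ s :=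
    h.choose_spec.2.2.2.1
  have hcompl : ∀ u : ℕ → Z,
      (∀ ε : ℝ, 0 < ε → ∃ N, ∀ m ≥ N, ∀ n ≥ N, nm (u m - u n) < ε) →
      ∃ x, Filter.Tendsto u Filter.atTop (nhds x) := h.choose_spec.2.2.2.2
  let gn : AddGroupNorm (NCopy Z) :=
    { toFun := nm
      map_zero' := (h0 0).2 rfl
      add_le' := hadd
      neg' := fun x => by
        have := hsmul (-1) x
        rw [abs_neg, abs_one, one_mul] at this
        rw [← this]
        exact congrArg nm (neg_one_smul ℝ (show Z from x)).symm
      eq_zero_of_map_eq_zero' := fun x hx => (h0 x).1 hx }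
  letI nacg : NormedAddCommGroup (NCopy Z) := gn.toNormedAddCommGroup
  letI nsp : NormedSpace ℝ (NCopy Z) :=
    { toModule := (inferInstance : Module ℝ (NCopy Z))
      norm_smul_le := fun c x => by
        change nm (c • x) ≤ |c| * nm x
        exact (hsmul c x).le }
  have hnorm_eq : ∀ x : NCopy Z, ‖x‖ = nm x := fun x => rfl
  have hopen' : ∀ s : Set Z, IsOpen (X := NCopy Z) s ↔ IsOpen (X := Z) s := by
    intro s
    rw [@Metric.isOpen_iff (NCopy Z) _ s, hopen s]
    constructor
    · intro hs x hx
      obtain ⟨ε, hε, hb⟩ := hs x hx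
      refine ⟨ε, hε, fun y hy => hb ?_⟩
      rw [@Metric.mem_ball (NCopy Z) _ x y ε, @dist_eq_norm (NCopy Z) _ y x, hnorm_eq]
      exact hy
    · intro hs x hx
      obtain ⟨ε, hε, hb⟩ := hs x hx
      refine ⟨ε, hε, fun y hy => hb y ?_⟩
      rw [@Metric.mem_ball (NCopy Z) _ x y ε, dist_eq_norm, hnorm_eq] at hy
      exact hy
  let eqv : NCopy Z ≃L[ℝ] Z :=
    { toLinearEquiv := (LinearEquiv.refl ℝ Z : NCopy Z ≃ₗ[ℝ] Z)
      continuous_toFun := by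
        rw [continuous_def]
        intro s hs
        exact (hopen' s).2 hs
      continuous_invFun := by
        rw [continuous_def]
        intro s hs
        exact (hopen' s).1 hs }
  haveI csp : CompleteSpace (NCopy Z) := by
    apply Metric.complete_of_cauchySeq_tendsto
    intro u hu
    obtain ⟨x, hx⟩ := hcompl u (fun ε hε => by
      obtain ⟨N, hN⟩ := Metric.cauchySeq_iff.1 hu ε hε
      exact ⟨N, fun m hm n hn => by
        have := hN m hm n hn
        rwa [dist_eq_norm, hnorm_eq] at this⟩)
    refine ⟨x, ?_⟩
    have hcont : Continuous (eqv.symm : Z → NCopy Z) := eqv.symm.continuous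
    exact (hcont.tendsto x).comp hx
  { E := NCopy Z, nacg := nacg, nsp := nsp, csp := csp, equiv := eqv }

private theorem split_case_ii {X Y : Type*}
    [AddCommGroup X] [Module ℝ X] [TopologicalSpace X]
    [AddCommGroup Y] [Module ℝ Y] [TopologicalSpace Y]
    (hX : IsBanach X) (hY : IsBanach Y)
    {Ω₁ Ω₂ : Set (X × Y)} (h₁ : Convex ℝ Ω₁) (h₂ : Convex ℝ Ω₂)
    (hc₁ : IsClosed Ω₁) (hc₂ : IsClosed Ω₂)
    (L : Submodule ℝ (X × Y)) (hLc : IsClosed (L : Set (X × Y)))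
    (hspan : posSpan (Ω₁ - Ω₂) = (L : Set (X × Y)))
    {zb : X × Y} (hzb : zb ∈ Ω₁ ∩ Ω₂)
    (g : (X × Y) →L[ℝ] ℝ) (hg : ∀ z ∈ Ω₁ ∩ Ω₂, g (z - zb) ≤ 0) :
    ∃ g₁ g₂ : (X × Y) →L[ℝ] ℝ, g₁ + g₂ = g ∧ (∀ z ∈ Ω₁, g₁ (z - zb) ≤ 0) ∧
      ∀ z ∈ Ω₂, g₂ (z - zb) ≤ 0 := by
  classical
  let mX := banachModel hX
  let mY := banachModel hY
  letI := mX.nacg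
  letI := mX.nsp
  haveI := mX.csp
  letI := mY.nacg
  letI := mY.nsp
  haveI := mY.csp
  exact split_transfer (mX.equiv.prodCongr mY.equiv) h₁ h₂ hc₁ hc₂ L hLc hspan hzb g hg

/-- the coderivative intersection rule
`D*(F₁ ∩ F₂)(x̄,ȳ)(y*) = ⋃_{y₁* + y₂* = y*} (D*F₁(x̄,ȳ)(y₁*) + D*F₂(x̄,ȳ)(y₂*))`,
under either (i) `int(gph F₁) ∩ gph F₂ ≠ ∅`, or (ii) `X, Y` Banach, closed graphs and
`ℝ⁺(gph F₁ - gph F₂)` a closed linear subspace of `X × Y`. -/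
theorem coderivative_intersection_rule
    {X Y : Type*} [AddCommGroup X] [Module ℝ X] [TopologicalSpace X]
    [IsTopologicalAddGroup X] [ContinuousSMul ℝ X] [LocallyConvexSpace ℝ X] [T2Space X]
    [AddCommGroup Y] [Module ℝ Y] [TopologicalSpace Y]
    [IsTopologicalAddGroup Y] [ContinuousSMul ℝ Y] [LocallyConvexSpace ℝ Y] [T2Space Y]
    (F₁ F₂ : X → Set Y)
    (hF₁ : Convex ℝ (gphF F₁)) (hF₂ : Convex ℝ (gphF F₂))
    (hcase :
      (interior (gphF F₁) ∩ gphF F₂).Nonempty ∨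
      (IsBanach X ∧ IsBanach Y ∧ IsClosed (gphF F₁) ∧ IsClosed (gphF F₂) ∧
        ∃ L : Submodule ℝ (X × Y), IsClosed (L : Set (X × Y)) ∧
          posSpan (gphF F₁ - gphF F₂) = (L : Set (X × Y)))) :
    ∀ (xb : X) (yb : Y), yb ∈ F₁ xb ∩ F₂ xb →
      ∀ q : Y →L[ℝ] ℝ,
        coderivF (fun x => F₁ x ∩ F₂ x) xb yb q
          = ⋃ (q₁ : Y →L[ℝ] ℝ) (q₂ : Y →L[ℝ] ℝ) (_ : q₁ + q₂ = q),
              coderivF F₁ xb yb q₁ + coderivF F₂ xb yb q₂ := by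
  intro xb yb hyb q
  ext p
  simp only [Set.mem_iUnion]
  constructor
  · intro hp
    have hp' : ∀ x : X, ∀ y ∈ F₁ x ∩ F₂ x, p (x - xb) - q (y - yb) ≤ 0 := hp
    set g : (X × Y) →L[ℝ] ℝ :=
      (p.comp (ContinuousLinearMap.fst ℝ X Y)) - (q.comp (ContinuousLinearMap.snd ℝ X Y))
      with hgdef
    have hgapp : ∀ z : X × Y, g z = p z.1 - q z.2 := fun z => rfl
    have hzb : ((xb, yb) : X × Y) ∈ gphF F₁ ∩ gphF F₂ := ⟨hyb.1, hyb.2⟩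
    have hg : ∀ z ∈ gphF F₁ ∩ gphF F₂, g (z - (xb, yb)) ≤ 0 := by
      intro z hz
      have h1 := hp' z.1 z.2 ⟨hz.1, hz.2⟩
      have h2 : g (z - (xb, yb)) = p (z.1 - xb) - q (z.2 - yb) := rfl
      rw [h2]
      exact h1
    obtain ⟨g₁, g₂, hsum, h1, h2⟩ :
        ∃ g₁ g₂ : (X × Y) →L[ℝ] ℝ, g₁ + g₂ = g ∧
          (∀ z ∈ gphF F₁, g₁ (z - (xb, yb)) ≤ 0) ∧
          ∀ z ∈ gphF F₂, g₂ (z - (xb, yb)) ≤ 0 := by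
      rcases hcase with hcase | ⟨hX, hY, hcl1, hcl2, L, hLc, hspan⟩
      · exact split_interior hF₁ hF₂ hcase hzb g hg
      · exact split_case_ii hX hY hF₁ hF₂ hcl1 hcl2 L hLc hspan hzb g hg
    set q₁ : Y →L[ℝ] ℝ := -(g₁.comp (ContinuousLinearMap.inr ℝ X Y)) with hq₁def
    set q₂ : Y →L[ℝ] ℝ := -(g₂.comp (ContinuousLinearMap.inr ℝ X Y)) with hq₂def
    set p₁ : X →L[ℝ] ℝ := g₁.comp (ContinuousLinearMap.inl ℝ X Y) with hp₁def
    set p₂ : X →L[ℝ] ℝ := g₂.comp (ContinuousLinearMap.inl ℝ X Y) with hp₂def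
    have hq₁app : ∀ y : Y, q₁ y = -(g₁ (0, y)) := fun y => rfl
    have hq₂app : ∀ y : Y, q₂ y = -(g₂ (0, y)) := fun y => rfl
    have hp₁app : ∀ x : X, p₁ x = g₁ (x, 0) := fun x => rfl
    have hp₂app : ∀ x : X, p₂ x = g₂ (x, 0) := fun x => rfl
    refine ⟨q₁, q₂, ?_, ?_⟩
    · -- q₁ + q₂ = q
      ext y
      have hc := DFunLike.congr_fun hsum ((0 : X), y)
      simp only [ContinuousLinearMap.add_apply] at hc ⊢
      rw [hq₁app, hq₂app]
      have : g ((0 : X), y) = p 0 - q y := hgapp _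
      rw [map_zero] at this
      rw [← hc] at this
      linarith
    · -- membership in the sum set
      rw [Set.mem_add]
      refine ⟨p₁, ?_, p₂, ?_, ?_⟩
      · intro x y hy
        have hmem : ((x, y) : X × Y) ∈ gphF F₁ := hy
        have := h1 _ hmem
        have heq : g₁ ((x, y) - (xb, yb)) = p₁ (x - xb) - q₁ (y - yb) := by
          rw [hp₁app, hq₁app]
          have hsplit : ((x, y) - (xb, yb) : X × Y) = (x - xb, (0:Y)) + ((0:X), y - yb) := by
            simp [Prod.ext_iff]
          rw [hsplit, map_add]
          ring
        rw [heq] at this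
        exact this
      · intro x y hy
        have hmem : ((x, y) : X × Y) ∈ gphF F₂ := hy
        have := h2 _ hmem
        have heq : g₂ ((x, y) - (xb, yb)) = p₂ (x - xb) - q₂ (y - yb) := by
          rw [hp₂app, hq₂app]
          have hsplit : ((x, y) - (xb, yb) : X × Y) = (x - xb, (0:Y)) + ((0:X), y - yb) := by
            simp [Prod.ext_iff]
          rw [hsplit, map_add]
          ring
        rw [heq] at this
        exact this
      · -- p₁ + p₂ = p
        ext x
        have hc := DFunLike.congr_fun hsum ((x, (0 : Y)))
        simp only [ContinuousLinearMap.add_apply] at hc ⊢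
        rw [hp₁app, hp₂app]
        have : g ((x, (0 : Y))) = p x - q 0 := hgapp _
        rw [map_zero] at this
        rw [hc, this]
        ring
  · rintro ⟨q₁, q₂, hq, hmem⟩
    rw [Set.mem_add] at hmem
    obtain ⟨p₁, hp₁, p₂, hp₂, rfl⟩ := hmem
    intro x y hy
    have h1 := hp₁ x y hy.1
    have h2 := hp₂ x y hy.2
    have hq' : q (y - yb) = q₁ (y - yb) + q₂ (y - yb) := by
      rw [← hq]; rfl
    show (p₁ + p₂) (x - xb) - q (y - yb) ≤ 0
    rw [ContinuousLinearMap.add_apply, hq']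
    linarith
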